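/- One has the identity 1 + Σ_{A : ∅ ≠ A ⊆ N} (−1)^{|A|} exp(−u^A) = exp(−u^N) · Σ_{m=1}^{∞} (1/m!) Σ_{(C_1, …, C_m)} ∏_{i=1}^{m} v_{C_i}, where the inner sum ranges over all ordered m-tuples (C_1, …, C_m) of nonempty subsets of N with C_1 ∪ ⋯ ∪ C_m = N, and the series over m converges absolutely. -/
import Mathlib
open Finset

private lemma compl_alt {n : ℕ} (U : Finset (Fin n)) :
    ∑ A ∈ Finset.univ.powerset.filter (fun A => U ⊆ A),
        (-1 : ℝ) ^ ((Finset.univ \ A).card)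
      = if U = Finset.univ then 1 else 0 := by
  have key : ∑ A ∈ Finset.univ.powerset.filter (fun A => U ⊆ A),
        (-1 : ℝ) ^ ((Finset.univ \ A).card)
      = ∑ D ∈ (Finset.univ \ U).powerset, (-1 : ℝ) ^ D.card := by
    refine Finset.sum_nbij' (fun A => Finset.univ \ A) (fun D => Finset.univ \ D) ?_ ?_ ?_ ?_ ?_
    · intro A hA
      simp only [mem_filter, mem_powerset] at hA ⊢
      exact sdiff_subset_sdiff le_rfl hA.2
    · intro D hD
      simp only [mem_powerset] at hD
      simp only [mem_filter, mem_powerset]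
      refine ⟨sdiff_subset, ?_⟩
      intro x hx
      simp only [mem_sdiff, mem_univ, true_and]
      intro hxD
      exact (mem_sdiff.mp (hD hxD)).2 hx
    · intro A hA
      simp [sdiff_sdiff_right_self, inf_eq_inter, univ_inter]
    · intro D hD
      simp [sdiff_sdiff_right_self, inf_eq_inter, univ_inter]
    · intro A hA; rfl
  rw [key]
  have h := @Finset.sum_powerset_neg_one_pow_card (Fin n) _ (Finset.univ \ U)
  have h2 := congrArg (fun z : ℤ => (z : ℝ)) h
  push_cast at h2
  rw [h2]
  by_cases hU : U = Finset.univ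
  · simp [hU]
  · rw [if_neg (by simpa [sdiff_eq_empty_iff_subset] using fun h => hU (univ_subset_iff.mp h)),
      if_neg hU]

private lemma alt_sum {n : ℕ} (E F : Finset (Fin n)) :
    ∑ C ∈ F.powerset.filter (fun C => E ⊆ C), (-1 : ℝ) ^ C.card
      = if E = F then (-1 : ℝ) ^ F.card else 0 := by
  by_cases hEF : E ⊆ F
  · have key : ∑ C ∈ F.powerset.filter (fun C => E ⊆ C), (-1 : ℝ) ^ C.card
        = ∑ D ∈ (F \ E).powerset, (-1 : ℝ) ^ E.card * (-1 : ℝ) ^ D.card := by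
      refine Finset.sum_nbij' (fun C => C \ E) (fun D => E ∪ D) ?_ ?_ ?_ ?_ ?_
      · intro C hC
        simp only [mem_filter, mem_powerset] at hC ⊢
        exact sdiff_subset_sdiff hC.1 le_rfl
      · intro D hD
        simp only [mem_powerset] at hD
        simp only [mem_filter, mem_powerset]
        exact ⟨union_subset hEF ((hD.trans (sdiff_subset))), subset_union_left⟩
      · intro C hC
        simp only [mem_filter, mem_powerset] at hC
        exact union_sdiff_of_subset hC.2
      · intro D hD
        simp only [mem_powerset] at hD
        exact union_sdiff_cancel_left (sdiff_disjoint.mono_left hD).symm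
      · intro C hC
        simp only [mem_filter, mem_powerset] at hC
        rw [← pow_add]
        congr 1
        rw [add_comm, card_sdiff_add_card_eq_card hC.2]
    rw [key, ← mul_sum]
    have : ∑ D ∈ (F \ E).powerset, (-1 : ℝ) ^ D.card
        = if F \ E = ∅ then 1 else 0 := by
      have h := @Finset.sum_powerset_neg_one_pow_card (Fin n) _ (F \ E)
      have := congrArg (fun z : ℤ => (z : ℝ)) h
      push_cast at this
      simpa using this
    rw [this]
    by_cases hFE : E = F
    · subst hFE; simp
    · rw [if_neg hFE, if_neg (fun h => hFE (hEF.antisymm (sdiff_eq_empty_iff_subset.mp h)))]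
      ring
  · rw [Finset.sum_eq_zero, if_neg (fun h : E = F => hEF (le_of_eq h))]
    intro C hC
    simp only [mem_filter, mem_powerset] at hC
    exact absurd (hC.2.trans hC.1) hEF

private lemma sum_v_eq {n : ℕ} (hn : 1 ≤ n) (u v : Finset (Fin n) → ℝ) (hu0 : u ∅ = 0)
    (hv : ∀ A : Finset (Fin n), A.Nonempty →
      v A = ∑ B ∈ Finset.univ.powerset.filter
          (fun B => Finset.univ \ A ⊆ B ∧ B ≠ ∅),
        (-1 : ℝ) ^ (A.card + B.card + n + 1) * u B)
    (A : Finset (Fin n)) :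
    ∑ C ∈ A.powerset.filter (fun C => C ≠ ∅), v C
      = u Finset.univ - u (Finset.univ \ A) := by
  have hcompl : ∀ B : Finset (Fin n), Finset.univ \ (Finset.univ \ B) = B := fun B => by
    simp
  have hconv : ∀ B : Finset (Fin n), ∀ C : Finset (Fin n),
      (Finset.univ \ C ⊆ B) ↔ (Finset.univ \ B ⊆ C) := by
    intro B C
    constructor <;> intro h <;>
    · intro x hx
      simp only [mem_sdiff, mem_univ, true_and] at hx
      by_contra hxC
      exact hx (h (by simp [hxC]))
  have step1 : ∑ C ∈ A.powerset.filter (fun C => C ≠ ∅), v C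
      = ∑ C ∈ A.powerset.filter (fun C => C ≠ ∅),
          ∑ B ∈ Finset.univ.powerset.filter
            (fun B => Finset.univ \ C ⊆ B ∧ B ≠ ∅),
          (-1 : ℝ) ^ (C.card + B.card + n + 1) * u B := by
    refine Finset.sum_congr rfl fun C hC => ?_
    simp only [mem_filter, mem_powerset] at hC
    exact hv C (nonempty_iff_ne_empty.mpr hC.2)
  rw [step1]
  rw [Finset.sum_comm' (s := A.powerset.filter (fun C => C ≠ ∅))
    (t := fun C => Finset.univ.powerset.filter (fun B => Finset.univ \ C ⊆ B ∧ B ≠ ∅))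
    (t' := Finset.univ.powerset.filter (fun B => B ≠ ∅))
    (s' := fun B => A.powerset.filter (fun C => Finset.univ \ B ⊆ C ∧ C ≠ ∅))
    (by
      intro C B
      simp only [mem_filter, mem_powerset]
      rw [hconv B C]
      tauto)]
  have inner : ∀ B ∈ Finset.univ.powerset.filter (fun B => (B : Finset (Fin n)) ≠ ∅),
      ∑ C ∈ A.powerset.filter (fun C => Finset.univ \ B ⊆ C ∧ C ≠ ∅),
        (-1 : ℝ) ^ (C.card + B.card + n + 1) * u B
      = (if B = Finset.univ \ A then ((-1:ℝ) ^ A.card * ((-1:ℝ) ^ (B.card + n + 1) * u B)) else 0)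
        - (if B = Finset.univ then ((-1:ℝ) ^ (B.card + n + 1) * u B) else 0) := by
    intro B hB
    simp only [mem_filter, mem_powerset] at hB
    have factored : ∑ C ∈ A.powerset.filter (fun C => Finset.univ \ B ⊆ C ∧ C ≠ ∅),
        (-1 : ℝ) ^ (C.card + B.card + n + 1) * u B
      = ((-1:ℝ) ^ (B.card + n + 1) * u B) *
          ∑ C ∈ A.powerset.filter (fun C => Finset.univ \ B ⊆ C ∧ C ≠ ∅),
            (-1 : ℝ) ^ C.card := by
      rw [mul_sum]
      refine Finset.sum_congr rfl fun C hC => ?_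
      rw [pow_add, pow_add, pow_add]
      ring
    rw [factored]
    have hsplit : ∑ C ∈ A.powerset.filter (fun C => Finset.univ \ B ⊆ C ∧ C ≠ ∅),
        (-1 : ℝ) ^ C.card
      = (∑ C ∈ A.powerset.filter (fun C => Finset.univ \ B ⊆ C), (-1 : ℝ) ^ C.card)
        - (if B = Finset.univ then 1 else 0) := by
      have h1 : A.powerset.filter (fun C => Finset.univ \ B ⊆ C ∧ C ≠ ∅)
          = (A.powerset.filter (fun C => Finset.univ \ B ⊆ C)).filter (fun C => C ≠ ∅) := by
        rw [filter_filter]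
      have h2 : (A.powerset.filter (fun C => Finset.univ \ B ⊆ C)).filter (fun C => ¬ C ≠ ∅)
          = if B = Finset.univ then {∅} else ∅ := by
        split_ifs with hBu
        · subst hBu
          ext C
          simp only [mem_filter, mem_powerset, not_not, mem_singleton, sdiff_self]
          constructor
          · rintro ⟨-, h⟩; exact h
          · rintro rfl; simp
        · ext C
          simp only [mem_filter, mem_powerset, not_not, notMem_empty, iff_false, not_and]
          rintro ⟨-, hsub⟩ rfl
          exact hBu (univ_subset_iff.mp (sdiff_eq_empty_iff_subset.mp (subset_empty.mp hsub)))
      have h3 := Finset.sum_filter_add_sum_filter_not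
        (A.powerset.filter (fun C => Finset.univ \ B ⊆ C)) (fun C => C ≠ ∅)
        (fun C => (-1 : ℝ) ^ C.card)
      rw [h2] at h3
      rw [h1, ← h3]
      split_ifs with hBu <;> simp
    rw [hsplit, alt_sum]
    have hcond : (Finset.univ \ B = A) ↔ (B = Finset.univ \ A) := by
      constructor
      · rintro rfl; rw [hcompl]
      · rintro rfl; rw [hcompl]
    simp only [hcond]
    split_ifs <;> ring
  rw [Finset.sum_congr rfl inner, Finset.sum_sub_distrib,
    Finset.sum_ite_eq' (Finset.univ.powerset.filter (fun B => (B : Finset (Fin n)) ≠ ∅))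
      (Finset.univ \ A)
      (fun B => (-1:ℝ) ^ A.card * ((-1:ℝ) ^ (B.card + n + 1) * u B)),
    Finset.sum_ite_eq' (Finset.univ.powerset.filter (fun B => (B : Finset (Fin n)) ≠ ∅))
      Finset.univ
      (fun B => (-1:ℝ) ^ (B.card + n + 1) * u B)]
  have hne : (Finset.univ : Finset (Fin n)) ≠ ∅ :=
    nonempty_iff_ne_empty.mp ⟨⟨0, hn⟩, mem_univ _⟩
  have huniv_mem : Finset.univ ∈ Finset.univ.powerset.filter
      (fun B => (B : Finset (Fin n)) ≠ ∅) := by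
    simp [hne]
  have hsign : ((-1:ℝ)) ^ (Finset.univ.card (α := Fin n) + n + 1) = -1 := by
    rw [card_univ, Fintype.card_fin]
    have : n + n + 1 = 2 * n + 1 := by omega
    rw [this, pow_succ, pow_mul]
    norm_num
  have hcards : (Finset.univ \ A).card + A.card = n := by
    rw [card_sdiff_add_card_eq_card (subset_univ A), card_univ, Fintype.card_fin]
  rw [if_pos huniv_mem]
  by_cases hA : A = Finset.univ
  · rw [if_neg (by simp [hA, sdiff_self]), hsign]
    simp [hA, sdiff_self, hu0]
  · have hAne : Finset.univ \ A ≠ ∅ := fun h =>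
      hA (univ_subset_iff.mp (sdiff_eq_empty_iff_subset.mp h))
    rw [if_pos (by simp [hAne]), hsign]
    have hsign2 : (-1:ℝ) ^ A.card * ((-1:ℝ) ^ ((Finset.univ \ A).card + n + 1)) = -1 := by
      rw [← pow_add]
      have : A.card + ((Finset.univ \ A).card + n + 1) = 2 * n + 1 := by omega
      rw [this, pow_succ, pow_mul]
      norm_num
    calc (-1:ℝ) ^ A.card * ((-1:ℝ) ^ ((Finset.univ \ A).card + n + 1) * u (Finset.univ \ A))
          - (-1) * u Finset.univ
        = ((-1:ℝ) ^ A.card * ((-1:ℝ) ^ ((Finset.univ \ A).card + n + 1))) * u (Finset.univ \ A)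
          + u Finset.univ := by ring
      _ = u Finset.univ - u (Finset.univ \ A) := by rw [hsign2]; ring

/-- Lemma 4.3: `1 + Σ_{∅ ≠ A ⊆ N} (−1)^{|A|} exp(−u^A)
= exp(−u^N) Σ_{m ≥ 1} (1/m!) Σ_{C_1 ∪ ⋯ ∪ C_m = N, C_i ≠ ∅} ∏_i v_{C_i}`,
the series converging absolutely.  (The `m = 0` term of the series below vanishes
since `n ≥ 1`, so the sum over all `m : ℕ` coincides with the sum over `m ≥ 1`.) -/
theorem martingale_expansion (n : ℕ) (hn : 1 ≤ n)
    (u v : Finset (Fin n) → ℝ) (hu0 : u ∅ = 0)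
    (hv : ∀ A : Finset (Fin n), A.Nonempty →
      v A = ∑ B ∈ Finset.univ.powerset.filter
          (fun B => Finset.univ \ A ⊆ B ∧ B ≠ ∅),
        (-1 : ℝ) ^ (A.card + B.card + n + 1) * u B)
    :
    Summable (fun m : ℕ =>
      |(1 / (m.factorial : ℝ)) *
        ∑ f ∈ (Finset.univ : Finset (Fin m → Finset (Fin n))).filter
            (fun f => (∀ i, f i ≠ ∅) ∧ Finset.univ.biUnion f = Finset.univ),
          ∏ i, v (f i)|) ∧
    1 + ∑ A ∈ (Finset.univ : Finset (Fin n)).powerset.filter (fun A => A ≠ ∅),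
        (-1 : ℝ) ^ A.card * Real.exp (-(u A))
      = Real.exp (-(u Finset.univ)) *
          ∑' m : ℕ, (1 / (m.factorial : ℝ)) *
            ∑ f ∈ (Finset.univ : Finset (Fin m → Finset (Fin n))).filter
                (fun f => (∀ i, f i ≠ ∅) ∧ Finset.univ.biUnion f = Finset.univ),
              ∏ i, v (f i) := by
  classical
  set S : Finset (Fin n) → ℝ := fun A => u Finset.univ - u (Finset.univ \ A) with hSdef
  set c : Finset (Fin n) → ℝ := fun A => (-1 : ℝ) ^ ((Finset.univ \ A).card) with hcdef
  have hSA := sum_v_eq hn u v hu0 hv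
  -- Step B
  have hT : ∀ m : ℕ,
      (∑ f ∈ (Finset.univ : Finset (Fin m → Finset (Fin n))).filter
          (fun f => (∀ i, f i ≠ ∅) ∧ Finset.univ.biUnion f = Finset.univ),
        ∏ i, v (f i))
      = ∑ A ∈ Finset.univ.powerset, c A * (S A) ^ m := by
    intro m
    have expand : ∀ A : Finset (Fin n), (S A) ^ m
        = ∑ p ∈ Fintype.piFinset (fun _ : Fin m => A.powerset.filter (fun C => C ≠ ∅)),
            ∏ i, v (p i) := by
      intro A
      calc (S A) ^ m
          = ∏ _i : Fin m, (∑ C ∈ A.powerset.filter (fun C => C ≠ ∅), v C) := by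
            rw [Finset.prod_const, card_univ, Fintype.card_fin, hSA A]
        _ = ∑ p ∈ Fintype.piFinset (fun _ : Fin m => A.powerset.filter (fun C => C ≠ ∅)),
              ∏ i, v (p i) := Finset.prod_univ_sum _ _
    calc ∑ f ∈ (Finset.univ : Finset (Fin m → Finset (Fin n))).filter
            (fun f => (∀ i, f i ≠ ∅) ∧ Finset.univ.biUnion f = Finset.univ),
          ∏ i, v (f i)
        = ∑ f ∈ (Finset.univ : Finset (Fin m → Finset (Fin n))).filter
            (fun f => ∀ i, f i ≠ ∅),
            (if Finset.univ.biUnion f = Finset.univ then ∏ i, v (f i) else 0) := by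
          rw [← Finset.sum_filter, Finset.filter_filter]
      _ = ∑ f ∈ (Finset.univ : Finset (Fin m → Finset (Fin n))).filter
            (fun f => ∀ i, f i ≠ ∅),
            ∑ A ∈ Finset.univ.powerset.filter (fun A => Finset.univ.biUnion f ⊆ A),
              c A * ∏ i, v (f i) := by
          refine Finset.sum_congr rfl fun f hf => ?_
          rw [← Finset.sum_mul, compl_alt (Finset.univ.biUnion f)]
          split_ifs <;> ring
      _ = ∑ A ∈ Finset.univ.powerset,
            ∑ p ∈ Fintype.piFinset (fun _ : Fin m => A.powerset.filter (fun C => C ≠ ∅)),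
              c A * ∏ i, v (p i) := by
          refine (Finset.sum_comm' ?_).symm
          intro A p
          simp only [mem_filter, mem_powerset, mem_univ, true_and,
            Fintype.mem_piFinset, Finset.biUnion_subset]
          constructor
          · rintro ⟨hA, hp⟩
            exact ⟨⟨hA, fun i _ => (hp i).1⟩, fun i => (hp i).2⟩
          · rintro ⟨⟨hA, hsub⟩, hne⟩
            exact ⟨hA, fun i => ⟨hsub i trivial, hne i⟩⟩
      _ = ∑ A ∈ Finset.univ.powerset, c A * (S A) ^ m := by
          refine Finset.sum_congr rfl fun A hA => ?_
          rw [expand A, mul_sum]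
  have hterm : ∀ m : ℕ,
      (1 / (m.factorial : ℝ)) *
        ∑ f ∈ (Finset.univ : Finset (Fin m → Finset (Fin n))).filter
            (fun f => (∀ i, f i ≠ ∅) ∧ Finset.univ.biUnion f = Finset.univ),
          ∏ i, v (f i)
      = ∑ A ∈ Finset.univ.powerset, c A * ((S A) ^ m / m.factorial) := by
    intro m
    rw [hT m, mul_sum]
    exact Finset.sum_congr rfl fun A hA => by ring
  have hsummA : ∀ A : Finset (Fin n),
      Summable (fun m : ℕ => c A * ((S A) ^ m / m.factorial)) := fun A =>
    (Real.summable_pow_div_factorial (S A)).mul_left (c A)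
  have hsumm : Summable (fun m : ℕ =>
      (1 / (m.factorial : ℝ)) *
        ∑ f ∈ (Finset.univ : Finset (Fin m → Finset (Fin n))).filter
            (fun f => (∀ i, f i ≠ ∅) ∧ Finset.univ.biUnion f = Finset.univ),
          ∏ i, v (f i)) := by
    have : (fun m : ℕ =>
        (1 / (m.factorial : ℝ)) *
          ∑ f ∈ (Finset.univ : Finset (Fin m → Finset (Fin n))).filter
              (fun f => (∀ i, f i ≠ ∅) ∧ Finset.univ.biUnion f = Finset.univ),
            ∏ i, v (f i))
        = fun m : ℕ => ∑ A ∈ Finset.univ.powerset, c A * ((S A) ^ m / m.factorial) :=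
      funext hterm
    rw [this]
    exact summable_sum fun A _ => hsummA A
  refine ⟨summable_abs_iff.mpr hsumm, ?_⟩
  have hexp : ∀ x : ℝ, ∑' m : ℕ, x ^ m / (m.factorial : ℝ) = Real.exp x := by
    intro x
    rw [Real.exp_eq_exp_ℝ, NormedSpace.exp_eq_tsum_div]
  have htsum : ∑' m : ℕ, (1 / (m.factorial : ℝ)) *
        ∑ f ∈ (Finset.univ : Finset (Fin m → Finset (Fin n))).filter
            (fun f => (∀ i, f i ≠ ∅) ∧ Finset.univ.biUnion f = Finset.univ),
          ∏ i, v (f i)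
      = ∑ A ∈ Finset.univ.powerset, c A * Real.exp (S A) := by
    calc ∑' m : ℕ, (1 / (m.factorial : ℝ)) *
          ∑ f ∈ (Finset.univ : Finset (Fin m → Finset (Fin n))).filter
              (fun f => (∀ i, f i ≠ ∅) ∧ Finset.univ.biUnion f = Finset.univ),
            ∏ i, v (f i)
        = ∑' m : ℕ, ∑ A ∈ Finset.univ.powerset, c A * ((S A) ^ m / m.factorial) := by
          exact tsum_congr hterm
      _ = ∑ A ∈ Finset.univ.powerset, ∑' m : ℕ, c A * ((S A) ^ m / m.factorial) :=
          Summable.tsum_finsetSum fun A _ => hsummA A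
      _ = ∑ A ∈ Finset.univ.powerset, c A * Real.exp (S A) := by
          refine Finset.sum_congr rfl fun A hA => ?_
          rw [tsum_mul_left, hexp (S A)]
  rw [htsum, Finset.mul_sum]
  have step : ∀ A ∈ (Finset.univ : Finset (Fin n)).powerset,
      Real.exp (-(u Finset.univ)) * (c A * Real.exp (S A))
        = c A * Real.exp (-(u (Finset.univ \ A))) := by
    intro A hA
    rw [hSdef]
    rw [mul_comm (Real.exp _), mul_assoc, ← Real.exp_add]
    congr 2
    ring
  rw [Finset.sum_congr rfl step]
  -- reindex by complement
  have reindex : ∑ A ∈ (Finset.univ : Finset (Fin n)).powerset,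
      c A * Real.exp (-(u (Finset.univ \ A)))
      = ∑ B ∈ (Finset.univ : Finset (Fin n)).powerset,
          (-1 : ℝ) ^ B.card * Real.exp (-(u B)) := by
    refine Finset.sum_nbij' (fun A => Finset.univ \ A) (fun B => Finset.univ \ B) ?_ ?_ ?_ ?_ ?_
    · intro A hA; simp
    · intro B hB; simp
    · intro A hA; simp
    · intro B hB; simp
    · intro A hA; rfl
  rw [reindex]
  have hsplit : ∑ B ∈ (Finset.univ : Finset (Fin n)).powerset,
      (-1 : ℝ) ^ B.card * Real.exp (-(u B))
      = 1 + ∑ B ∈ (Finset.univ : Finset (Fin n)).powerset.filter (fun B => B ≠ ∅),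
          (-1 : ℝ) ^ B.card * Real.exp (-(u B)) := by
    rw [Finset.filter_ne']
    rw [← Finset.add_sum_erase _ _ (mem_powerset.mpr (empty_subset _))]
    congr 1
    simp [hu0]
  rw [hsplit]
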